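/- Let n be a natural number with n ≥ 3, and let c, C ∈ ℝ. On the set of τ with c + 2τ > 0, define v₂(τ) = (n−1)/(c+2τ) and u₀(τ) = −(n/(n−2)) · 1/(c+2τ) + C · (c+2τ)^{−n/2}. Then for all such τ: (i) v₂'(τ) = −(2/(n−1)) v₂(τ)², and (ii) u₀'(τ) = −(n/(n−1)²) · ( (n−1) u₀(τ) v₂(τ) + v₂(τ)² ). -/

import Mathlib

/-- Explicit solution of the formal center-manifold ODE system in dimensions `n ≥ 3`:
with `v₂(τ) = (n−1)/(c+2τ)` and `u₀(τ) = −(n/(n−2))/(c+2τ) + C (c+2τ)^{−n/2}`, on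
`{τ : c+2τ > 0}` one has `v₂' = −(2/(n−1)) v₂²` and
`u₀' = −(n/(n−1)²)((n−1) u₀ v₂ + v₂²)`. -/
theorem center_manifold_ode_solution (n : ℕ) (hn : 3 ≤ n) (c C : ℝ) (τ : ℝ)
    (hτ : 0 < c + 2 * τ) :
    HasDerivAt (fun t : ℝ => ((n : ℝ) - 1) / (c + 2 * t))
        (-(2 / ((n : ℝ) - 1)) * (((n : ℝ) - 1) / (c + 2 * τ)) ^ 2) τ ∧
      HasDerivAt
        (fun t : ℝ => -((n : ℝ) / ((n : ℝ) - 2)) * (1 / (c + 2 * t))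
          + C * (c + 2 * t) ^ (-(n : ℝ) / 2))
        (-((n : ℝ) / ((n : ℝ) - 1) ^ 2) *
          (((n : ℝ) - 1) *
              (-((n : ℝ) / ((n : ℝ) - 2)) * (1 / (c + 2 * τ))
                + C * (c + 2 * τ) ^ (-(n : ℝ) / 2)) *
              (((n : ℝ) - 1) / (c + 2 * τ))
            + (((n : ℝ) - 1) / (c + 2 * τ)) ^ 2)) τ := by
  have hn' : (3 : ℝ) ≤ (n : ℝ) := by exact_mod_cast hn
  have hs : c + 2 * τ ≠ 0 := ne_of_gt hτ
  have hn1 : (n : ℝ) - 1 ≠ 0 := by linarith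
  have hn2 : (n : ℝ) - 2 ≠ 0 := by linarith
  have h1 : HasDerivAt (fun t : ℝ => c + 2 * t) 2 τ := by
    simpa using ((hasDerivAt_id τ).const_mul 2).const_add c
  constructor
  · have := (hasDerivAt_const τ ((n : ℝ) - 1)).div h1 hs
    refine this.congr_deriv ?_
    field_simp
    ring
  · have h2 : HasDerivAt (fun t : ℝ => -((n : ℝ) / ((n : ℝ) - 2)) * (1 / (c + 2 * t)))
        (-((n : ℝ) / ((n : ℝ) - 2)) * ((0 * (c + 2 * τ) - 1 * 2) / (c + 2 * τ) ^ 2)) τ :=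
      ((hasDerivAt_const τ (1 : ℝ)).div h1 hs).const_mul _
    have h3 : HasDerivAt (fun t : ℝ => C * (c + 2 * t) ^ (-(n : ℝ) / 2))
        (C * (2 * (-(n : ℝ) / 2) * (c + 2 * τ) ^ (-(n : ℝ) / 2 - 1))) τ :=
      (h1.rpow_const (Or.inl hs)).const_mul C
    have := h2.add h3
    refine this.congr_deriv ?_
    have hpow : (c + 2 * τ) ^ (-(n : ℝ) / 2 - 1)
        = (c + 2 * τ) ^ (-(n : ℝ) / 2) / (c + 2 * τ) := by
      rw [Real.rpow_sub hτ, Real.rpow_one]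
    rw [hpow]
    field_simp
    ring
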